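/- If λ_n ≥ 1/3 for all n ≥ k+1, then C(λ) - C(λ) = C_k(λ) - C_k(λ) = ⋃_{s ∈ {0,1,2}^k} J_s, a union of at most 3^k closed intervals. -/

import Mathlib

open Set Pointwise Filter MeasureTheory

noncomputable section

/-- `dseq lam n = λ₁ ⋯ λₙ` (with `lam i` the `i`-th term, `1`-indexed); `dseq lam 0 = 1`. -/
def dseq (lam : ℕ → ℝ) (n : ℕ) : ℝ := ∏ i ∈ Finset.Icc 1 n, lam i

/-- Left endpoint of the interval `I_p` of the central Cantor construction. -/
def leftI (lam : ℕ → ℝ) (p : List Bool) : ℝ :=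
  ∑ i : Fin p.length, if p.get i then dseq lam (i : ℕ) - dseq lam ((i : ℕ) + 1) else 0

/-- The closed interval `I_p` of the central Cantor construction. -/
def Iset (lam : ℕ → ℝ) (p : List Bool) : Set ℝ :=
  Icc (leftI lam p) (leftI lam p + dseq lam p.length)

/-- The `n`-th stage `C_n(λ)` of the central Cantor construction. -/
def CnSet (lam : ℕ → ℝ) (n : ℕ) : Set ℝ :=
  ⋃ p ∈ {p : List Bool | p.length = n}, Iset lam p

/-- The central Cantor set `C(λ)`. -/
def CSet (lam : ℕ → ℝ) : Set ℝ := ⋂ n, CnSet lam n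

/-- `J_t = I_p - I_q` where `t i = p i - q i + 1` (pointwise set difference). -/
def Jset (lam : ℕ → ℝ) (t : List (Fin 3)) : Set ℝ :=
  Iset lam (t.map fun a => decide (a = 2)) - Iset lam (t.map fun a => decide (a = 0))

variable {lam : ℕ → ℝ}

lemma dseq_zero : dseq lam 0 = 1 := by simp [dseq]

lemma dseq_succ (n : ℕ) : dseq lam (n + 1) = dseq lam n * lam (n + 1) := by
  rw [dseq, dseq, Finset.prod_Icc_succ_top (by omega)]

section
variable (hlam : ∀ n, 1 ≤ n → lam n ∈ Ioo (0 : ℝ) (1 / 2))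
include hlam

lemma dseq_pos (n : ℕ) : 0 < dseq lam n := by
  induction n with
  | zero => simp [dseq_zero]
  | succ n ih => rw [dseq_succ]; exact mul_pos ih (hlam (n+1) (by omega)).1

lemma dseq_succ_le (n : ℕ) : dseq lam (n + 1) ≤ dseq lam n := by
  rw [dseq_succ]
  nlinarith [dseq_pos hlam n, (hlam (n+1) (by omega)).2, (hlam (n+1) (by omega)).1]

end

lemma leftI_eq_range (p : List Bool) : leftI lam p =
    ∑ i ∈ Finset.range p.length,
      if p.getD i false then dseq lam i - dseq lam (i + 1) else 0 := by
  rw [leftI, ← Fin.sum_univ_eq_sum_range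
    (fun i => if p.getD i false then dseq lam i - dseq lam (i + 1) else 0) p.length]
  refine Finset.sum_congr rfl fun i _ => ?_
  rw [List.getD_eq_getElem _ _ i.isLt]
  rfl

lemma leftI_concat (p : List Bool) (b : Bool) : leftI lam (p ++ [b]) =
    leftI lam p + if b then dseq lam p.length - dseq lam (p.length + 1) else 0 := by
  rw [leftI_eq_range, leftI_eq_range, List.length_append, List.length_singleton,
    Finset.sum_range_succ]
  congr 1
  · refine Finset.sum_congr rfl fun i hi => ?_
    rw [Finset.mem_range] at hi
    rw [List.getD_eq_getElem _ _ (by simp; omega), List.getD_eq_getElem _ _ hi,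
      List.getElem_append_left hi]
  · rw [List.getD_eq_getElem _ _ (by simp)]
    simp

section
variable (hlam : ∀ n, 1 ≤ n → lam n ∈ Ioo (0 : ℝ) (1 / 2))
include hlam

lemma Iset_concat_subset (p : List Bool) (b : Bool) :
    Iset lam (p ++ [b]) ⊆ Iset lam p := by
  have h1 := dseq_succ_le hlam p.length
  have h2 := dseq_pos hlam (p.length + 1)
  rw [Iset, Iset, leftI_concat, List.length_append, List.length_singleton]
  apply Icc_subset_Icc <;> cases b <;> simp <;> linarith

lemma CnSet_succ_subset (n : ℕ) : CnSet lam (n + 1) ⊆ CnSet lam n := by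
  intro x hx
  simp only [CnSet, mem_iUnion, mem_setOf_eq, exists_prop] at hx ⊢
  obtain ⟨p, hp, hxp⟩ := hx
  have hpne : p ≠ [] := by intro h; simp [h] at hp
  refine ⟨p.dropLast, by simp [hp], ?_⟩
  have : p.dropLast ++ [p.getLast hpne] = p := List.dropLast_append_getLast hpne
  exact Iset_concat_subset hlam _ _ (this ▸ hxp)

lemma CnSet_antitone : Antitone (CnSet lam) := by
  apply antitone_nat_of_succ_le
  exact fun n => CnSet_succ_subset hlam n

end

lemma Iset_subset_CnSet {p : List Bool} {n : ℕ} (hp : p.length = n) :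
    Iset lam p ⊆ CnSet lam n := by
  intro x hx
  simp only [CnSet, mem_iUnion, mem_setOf_eq, exists_prop]
  exact ⟨p, hp, hx⟩

/-- The center of `J_s`. -/
def ctr (lam : ℕ → ℝ) (s : List (Fin 3)) : ℝ :=
  leftI lam (s.map fun a => decide (a = 2)) - leftI lam (s.map fun a => decide (a = 0))

lemma Icc_sub_Icc' {a b c d : ℝ} (h1 : a ≤ b) (h2 : c ≤ d) :
    Icc a b - Icc c d = Icc (a - d) (b - c) := by
  rw [sub_eq_add_neg, Set.neg_Icc, Icc_add_Icc h1 (by linarith), sub_eq_add_neg a d,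
    sub_eq_add_neg b c]

section
variable (hlam : ∀ n, 1 ≤ n → lam n ∈ Ioo (0 : ℝ) (1 / 2))
include hlam

lemma Jset_eq (s : List (Fin 3)) :
    Jset lam s = Icc (ctr lam s - dseq lam s.length) (ctr lam s + dseq lam s.length) := by
  have hd := (dseq_pos hlam s.length).le
  rw [Jset, Iset, Iset, List.length_map, List.length_map,
    Icc_sub_Icc' (by linarith) (by linarith), ctr]
  congr 1 <;> ring

end

lemma ctr_concat (s : List (Fin 3)) (a : Fin 3) :
    ctr lam (s ++ [a]) = ctr lam s +
      ((if a = 2 then dseq lam s.length - dseq lam (s.length + 1) else 0)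
        - (if a = 0 then dseq lam s.length - dseq lam (s.length + 1) else 0)) := by
  rw [ctr, ctr, List.map_append, List.map_append, List.map_singleton, List.map_singleton,
    leftI_concat, leftI_concat, List.length_map, List.length_map]
  fin_cases a <;> simp <;> ring

section
variable (hlam : ∀ n, 1 ≤ n → lam n ∈ Ioo (0 : ℝ) (1 / 2))
include hlam

lemma Jset_step {s : List (Fin 3)} {x : ℝ} (h3 : (1 : ℝ) / 3 ≤ lam (s.length + 1))
    (hx : x ∈ Jset lam s) : ∃ a : Fin 3, x ∈ Jset lam (s ++ [a]) := by
  set n := s.length with hn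
  have hd := dseq_pos hlam n
  have hd' := dseq_pos hlam (n + 1)
  have hdle := dseq_succ_le hlam n
  have h3d : dseq lam n ≤ 3 * dseq lam (n + 1) := by
    rw [dseq_succ]; nlinarith
  rw [Jset_eq hlam] at hx
  obtain ⟨hx1, hx2⟩ := hx
  set c := ctr lam s
  rcases le_total x (c - dseq lam (n + 1)) with hc | hc
  · refine ⟨0, ?_⟩
    rw [Jset_eq hlam, ctr_concat]
    simp only [List.length_append, List.length_singleton, ← hn]
    constructor <;> simp <;> linarith
  rcases le_total (c + dseq lam (n + 1)) x with hc2 | hc2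
  · refine ⟨2, ?_⟩
    rw [Jset_eq hlam, ctr_concat]
    simp only [List.length_append, List.length_singleton, ← hn]
    constructor <;> simp <;> linarith
  · refine ⟨1, ?_⟩
    rw [Jset_eq hlam, ctr_concat]
    simp only [List.length_append, List.length_singleton, ← hn]
    constructor <;> simp <;> linarith

end

/-- encoding pair of bools as an element of `Fin 3`: `p - q + 1`. -/
def enc3 (b c : Bool) : Fin 3 := if b then (if c then 1 else 2) else (if c then 0 else 1)

lemma ctr_zipWith {p q : List Bool} (hpq : p.length = q.length) :
    ctr lam (List.zipWith enc3 p q) = leftI lam p - leftI lam q := by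
  have hlen : (List.zipWith enc3 p q).length = p.length := by
    rw [List.length_zipWith, hpq, min_self]
  rw [ctr, leftI_eq_range, leftI_eq_range, leftI_eq_range, leftI_eq_range,
    List.length_map, List.length_map, hlen, ← hpq, ← Finset.sum_sub_distrib,
    ← Finset.sum_sub_distrib]
  refine Finset.sum_congr rfl fun i hi => ?_
  rw [Finset.mem_range] at hi
  have hiq : i < q.length := hpq ▸ hi
  have hiz : i < (List.zipWith enc3 p q).length := hlen ▸ hi
  rw [List.getD_eq_getElem _ _ (by simpa using hiz), List.getD_eq_getElem _ _ (by simpa using hiz),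
    List.getD_eq_getElem _ _ hi, List.getD_eq_getElem _ _ hiq,
    List.getElem_map, List.getElem_map, List.getElem_zipWith]
  cases hb : p[i] <;> cases hc : q[i] <;> simp [enc3]

lemma Jset_subset_sub {s : List (Fin 3)} {n : ℕ} (hs : s.length = n) :
    Jset lam s ⊆ CnSet lam n - CnSet lam n := by
  rw [Jset]
  exact Set.sub_subset_sub (Iset_subset_CnSet (by simp [hs]))
    (Iset_subset_CnSet (by simp [hs]))

section
variable (hlam : ∀ n, 1 ≤ n → lam n ∈ Ioo (0 : ℝ) (1 / 2))
include hlam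

lemma sub_subset_biUnion (n : ℕ) :
    CnSet lam n - CnSet lam n ⊆ ⋃ s ∈ {s : List (Fin 3) | s.length = n}, Jset lam s := by
  rintro x ⟨y, hy, z, hz, rfl⟩
  simp only [CnSet, mem_iUnion, mem_setOf_eq, exists_prop] at hy hz
  obtain ⟨p, hp, hyp⟩ := hy
  obtain ⟨q, hq, hzq⟩ := hz
  have hpq : p.length = q.length := by rw [hp, hq]
  have hlen : (List.zipWith enc3 p q).length = n := by
    rw [List.length_zipWith, hp, hq, min_self]
  simp only [mem_iUnion, mem_setOf_eq, exists_prop]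
  refine ⟨List.zipWith enc3 p q, hlen, ?_⟩
  rw [Jset_eq hlam, ctr_zipWith hpq, hlen]
  rw [Iset, hp] at hyp
  rw [Iset, hq] at hzq
  obtain ⟨h1, h2⟩ := hyp
  obtain ⟨h3, h4⟩ := hzq
  constructor <;> simp <;> linarith

lemma CnSet_isCompact (n : ℕ) : IsCompact (CnSet lam n) :=
  (List.finite_length_eq Bool n).isCompact_biUnion fun _ _ => isCompact_Icc

lemma CnSet_isClosed (n : ℕ) : IsClosed (CnSet lam n) :=
  (List.finite_length_eq Bool n).isClosed_biUnion fun _ _ => isClosed_Icc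

end

/-- If `λₙ ≥ 1/3` for all `n ≥ k + 1`, then
`C(λ) - C(λ) = C_k(λ) - C_k(λ) = ⋃_{s ∈ {0,1,2}^k} J_s`. -/
theorem CSet_sub_CSet_of_eventually_ge (lam : ℕ → ℝ)
    (hlam : ∀ n, 1 ≤ n → lam n ∈ Ioo (0 : ℝ) (1 / 2)) (k : ℕ)
    (h : ∀ n, k + 1 ≤ n → (1 : ℝ) / 3 ≤ lam n) :
    CSet lam - CSet lam = CnSet lam k - CnSet lam k ∧
    CnSet lam k - CnSet lam k = ⋃ s ∈ {s : List (Fin 3) | s.length = k}, Jset lam s := by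
  constructor
  · apply Subset.antisymm
    · exact Set.sub_subset_sub (iInter_subset _ k) (iInter_subset _ k)
    · intro x hx
      -- x is in every level's difference set
      have hD : ∀ m : ℕ, x ∈ ⋃ s ∈ {s : List (Fin 3) | s.length = k + m}, Jset lam s := by
        intro m
        induction m with
        | zero => exact sub_subset_biUnion hlam k hx
        | succ m ih =>
          simp only [mem_iUnion, mem_setOf_eq, exists_prop] at ih ⊢
          obtain ⟨s, hs, hxs⟩ := ih
          obtain ⟨a, ha⟩ := Jset_step hlam (h (s.length + 1) (by omega)) hxs
          exact ⟨s ++ [a], by simp [hs]; omega, ha⟩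
      have hxn : ∀ n : ℕ, x ∈ CnSet lam n - CnSet lam n := by
        intro n
        have h1 := hD n
        simp only [mem_iUnion, mem_setOf_eq, exists_prop] at h1
        obtain ⟨s, hs, hxs⟩ := h1
        have h2 : x ∈ CnSet lam (k + n) - CnSet lam (k + n) := Jset_subset_sub hs hxs
        exact Set.sub_subset_sub (CnSet_antitone hlam (by omega))
          (CnSet_antitone hlam (by omega)) h2
      set K : ℕ → Set ℝ := fun n => CnSet lam n ∩ (fun y => x + y) '' CnSet lam n with hK
      have hKcl : ∀ n, IsClosed (K n) := fun n =>
        (CnSet_isClosed hlam n).inter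
          ((CnSet_isCompact hlam n).image (continuous_const.add continuous_id)).isClosed
      have hne : (⋂ n, K n).Nonempty := by
        apply IsCompact.nonempty_iInter_of_sequence_nonempty_isCompact_isClosed K
        · intro n
          exact inter_subset_inter (CnSet_succ_subset hlam n)
            (image_mono (CnSet_succ_subset hlam n))
        · intro n
          obtain ⟨y, hy, z, hz, hyz⟩ := hxn n
          have hyz' : y - z = x := hyz
          exact ⟨y, hy, ⟨z, hz, by dsimp; linarith⟩⟩
        · exact (CnSet_isCompact hlam 0).inter_right
            ((CnSet_isCompact hlam 0).image (continuous_const.add continuous_id)).isClosed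
        · exact hKcl
      obtain ⟨y, hy⟩ := hne
      rw [mem_iInter] at hy
      have hyC : y ∈ CSet lam := mem_iInter.2 fun n => (hy n).1
      have hyxC : y - x ∈ CSet lam := by
        refine mem_iInter.2 fun n => ?_
        obtain ⟨z, hz, hyz⟩ := (hy n).2
        have : y - x = z := by dsimp at hyz; linarith
        rwa [this]
      exact ⟨y, hyC, y - x, hyxC, by ring⟩
  · apply Subset.antisymm
    · exact sub_subset_biUnion hlam k
    · exact iUnion₂_subset fun s hs => Jset_subset_sub hs
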